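/- Let G = (A, B, E) be a bipartite graph, M₀ a maximal matching of G, M' any matching of G whose edges all have an A-endpoint in a subset A' ⊆ A, and M₁ = { e ∈ M' : e joins B(M₀) to A \ A(M₀) }. Then the number of edges ab ∈ M₀ such that some edge bc ∈ M₁ exists satisfies |{ ab ∈ M₀ : ∃c, bc ∈ M₁ }| ≥ |M'| − |A(M₀) ∩ A'|. -/

import Mathlib

/-- A matching in a bipartite graph with edge set `E ⊆ α × β`. -/
def IsBipMatching {α β : Type*} (E M : Finset (α × β)) : Prop :=
  M ⊆ E ∧ ∀ e ∈ M, ∀ f ∈ M, e ≠ f → e.1 ≠ f.1 ∧ e.2 ≠ f.2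

/-- A maximal matching: no edge of `E` can be added. -/
def IsBipMaximalMatching {α β : Type*} (E M : Finset (α × β)) : Prop :=
  IsBipMatching E M ∧ ∀ e ∈ E, e ∉ M → ∃ f ∈ M, f.1 = e.1 ∨ f.2 = e.2

/-- For a maximal matching `M₀`, a matching `M'` all of whose edges have `A`-endpoint
in `A'`, and `M₁ = {e ∈ M' : e joins B(M₀) to A \ A(M₀)}`, the number of edges
`ab ∈ M₀` such that some `bc ∈ M₁` exists is at least `|M'| − |A(M₀) ∩ A'|`. -/
theorem m0_edges_with_m1_partner {α β : Type*} [DecidableEq α] [DecidableEq β]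
    (E M₀ M' : Finset (α × β)) (A' : Finset α)
    (hM0 : IsBipMaximalMatching E M₀) (hM' : IsBipMatching E M')
    (hA' : ∀ e ∈ M', e.1 ∈ A') :
    ((M'.card : ℝ) - (((M₀.image Prod.fst) ∩ A').card : ℝ)) ≤
      ((M₀.filter (fun (e : α × β) => ∃ f ∈ M'.filter (fun (g : α × β) =>
          g.2 ∈ M₀.image Prod.snd ∧ g.1 ∉ M₀.image Prod.fst), f.2 = e.2)).card : ℝ) := by
  classical
  obtain ⟨⟨hM0E, hM0m⟩, hmax⟩ := hM0
  obtain ⟨hM'E, hM'm⟩ := hM'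
  set A0 := M₀.image Prod.fst with hA0
  set B0 := M₀.image Prod.snd with hB0
  set M₁ := M'.filter (fun g : α × β => g.2 ∈ B0 ∧ g.1 ∉ A0) with hM1
  set T := M₀.filter (fun e : α × β => ∃ f ∈ M₁, f.2 = e.2) with hT
  -- every edge of M' whose A-endpoint is uncovered lies in M₁
  have hsub : M'.filter (fun g : α × β => g.1 ∉ A0) ⊆ M₁ := by
    intro e he
    rw [Finset.mem_filter] at he
    obtain ⟨heM', hnA⟩ := he
    have heM0 : e ∉ M₀ := fun h => hnA (Finset.mem_image_of_mem _ h)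
    obtain ⟨f, hfM0, hf⟩ := hmax e (hM'E heM') heM0
    rcases hf with h1 | h2
    · exact absurd (h1 ▸ Finset.mem_image_of_mem Prod.fst hfM0) hnA
    · exact Finset.mem_filter.mpr ⟨heM', ⟨h2 ▸ Finset.mem_image_of_mem Prod.snd hfM0, hnA⟩⟩
  -- split M'
  have hsplit : M'.card = (M'.filter (fun g : α × β => g.1 ∈ A0)).card
      + (M'.filter (fun g : α × β => g.1 ∉ A0)).card :=
    (Finset.card_filter_add_card_filter_not _).symm
  -- covered part injects into A0 ∩ A'
  have hcov : (M'.filter (fun g : α × β => g.1 ∈ A0)).card ≤ (A0 ∩ A').card := by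
    apply Finset.card_le_card_of_injOn Prod.fst
    · intro e he
      rw [Finset.mem_coe, Finset.mem_filter] at he
      exact Finset.mem_inter.mpr ⟨he.2, hA' e he.1⟩
    · intro e he f hf hef
      simp only [Finset.coe_filter, Set.mem_setOf_eq] at he hf
      by_contra hne
      exact (hM'm e he.1 f hf.1 hne).1 hef
  -- M₁ injects into T
  have hM1T : M₁.card ≤ T.card := by
    apply Finset.card_le_card_of_injOn
      (fun e => if h : ∃ f ∈ M₀, f.2 = e.2 then h.choose else e)
    · intro e he
      have heB : e.2 ∈ B0 := (Finset.mem_filter.mp he).2.1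
      rw [hB0, Finset.mem_image] at heB
      obtain ⟨g, hg, hge⟩ := heB
      have h : ∃ f ∈ M₀, f.2 = e.2 := ⟨g, hg, hge⟩
      dsimp only
      rw [dif_pos h]
      obtain ⟨hc1, hc2⟩ := h.choose_spec
      exact Finset.mem_filter.mpr ⟨hc1, ⟨e, he, hc2.symm⟩⟩
    · intro e he f hf hef
      have heB : e.2 ∈ B0 := (Finset.mem_filter.mp he).2.1
      have hfB : f.2 ∈ B0 := (Finset.mem_filter.mp hf).2.1
      rw [hB0, Finset.mem_image] at heB hfB
      obtain ⟨g1, hg1, hge1⟩ := heB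
      obtain ⟨g2, hg2, hge2⟩ := hfB
      have h1 : ∃ x ∈ M₀, x.2 = e.2 := ⟨g1, hg1, hge1⟩
      have h2 : ∃ x ∈ M₀, x.2 = f.2 := ⟨g2, hg2, hge2⟩
      simp only [] at hef
      rw [dif_pos h1, dif_pos h2] at hef
      have : e.2 = f.2 := by
        rw [← h1.choose_spec.2, ← h2.choose_spec.2, hef]
      by_contra hne
      exact (hM'm e (Finset.mem_filter.mp he).1 f (Finset.mem_filter.mp hf).1 hne).2 this
  have hun : (M'.filter (fun g : α × β => g.1 ∉ A0)).card ≤ T.card :=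
    le_trans (Finset.card_le_card hsub) hM1T
  have hnat : M'.card ≤ (A0 ∩ A').card + T.card := by omega
  have : (M'.card : ℝ) ≤ ((A0 ∩ A').card : ℝ) + (T.card : ℝ) := by exact_mod_cast hnat
  linarith
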